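/- Let w = (w1, w2) ∈ ℕ₊², let L1 be an affine automorphism of ℂ², and let T_1, …, T_l (l ≥ 2) be triangular maps alternating between the forms (x,y) ↦ (x, y + f_i(x)) and (x,y) ↦ (x + f_i(y), y) with deg f_i > 1, where T_1 is of the first form. Set (k1, k2) = weighted bidegree of T_1 ∘ L1. Then for l = 2, the weighted bidegree of T_2 ∘ T_1 ∘ L1 is (k2 · deg f_2, k2); and for l > 2, the weighted bidegree of T_l ∘ ⋯ ∘ T_1 ∘ L1 equals (k2 ∏_{i=2}^{l} deg f_i, k2 ∏_{i=2}^{l-1} deg f_i) if l is even, and (k2 ∏_{i=2}^{l-1} deg f_i, k2 ∏_{i=2}^{l} deg f_i) if l is odd. -/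

import Mathlib

open MvPolynomial

/-- A polynomial map of ℂ², given by its two component polynomials. -/
abbrev PolyMap : Type := MvPolynomial (Fin 2) ℂ × MvPolynomial (Fin 2) ℂ

/-- Composition of polynomial maps: (F ∘ G). -/
noncomputable def pcomp (F G : PolyMap) : PolyMap :=
  (MvPolynomial.aeval ![G.1, G.2] F.1, MvPolynomial.aeval ![G.1, G.2] F.2)

/-- `F` is a polynomial automorphism of ℂ²: it has a polynomial inverse. -/
def IsPolyAut (F : PolyMap) : Prop :=
  ∃ G : PolyMap, pcomp F G = (MvPolynomial.X 0, MvPolynomial.X 1) ∧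
    pcomp G F = (MvPolynomial.X 0, MvPolynomial.X 1)

/-- Weighted degree with `wdeg x = w1`, `wdeg y = w2` (0 on the zero polynomial). -/
noncomputable def wdeg (w1 w2 : ℕ) (p : MvPolynomial (Fin 2) ℂ) : ℕ :=
  p.support.sup fun α => α 0 * w1 + α 1 * w2

/-- An affine automorphism: an automorphism both of whose components have total degree 1. -/
def IsAffineAut (F : PolyMap) : Prop :=
  IsPolyAut F ∧ F.1.totalDegree = 1 ∧ F.2.totalDegree = 1

/-- The triangular map (x, y) ↦ (x, y + f(x)). -/
noncomputable def lowerT (f : Polynomial ℂ) : PolyMap :=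
  (MvPolynomial.X 0,
   MvPolynomial.X 1 + Polynomial.aeval (MvPolynomial.X 0 : MvPolynomial (Fin 2) ℂ) f)

/-- The triangular map (x, y) ↦ (x + f(y), y). -/
noncomputable def upperT (f : Polynomial ℂ) : PolyMap :=
  (MvPolynomial.X 0 + Polynomial.aeval (MvPolynomial.X 1 : MvPolynomial (Fin 2) ℂ) f,
   MvPolynomial.X 1)

/-- `chain L1 f l = T_l ∘ ⋯ ∘ T_1 ∘ L1`, where `T_i = lowerT (f i)` for odd `i`
and `T_i = upperT (f i)` for even `i`. -/
noncomputable def chain (L1 : PolyMap) (f : ℕ → Polynomial ℂ) : ℕ → PolyMap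
  | 0 => L1
  | i + 1 => pcomp (if i % 2 = 0 then lowerT (f (i + 1)) else upperT (f (i + 1))) (chain L1 f i)


section Aux
variable {w1 w2 : ℕ} {p q : MvPolynomial (Fin 2) ℂ}
lemma wdeg_zero : wdeg w1 w2 0 = 0 := by simp [wdeg]

lemma ne_zero_of_wdeg_pos (h : 0 < wdeg w1 w2 p) : p ≠ 0 := by
  rintro rfl; simp [wdeg_zero] at h

lemma le_wdeg {α : Fin 2 →₀ ℕ} (h : α ∈ p.support) :
    α 0 * w1 + α 1 * w2 ≤ wdeg w1 w2 p :=
  Finset.le_sup (f := fun α : Fin 2 →₀ ℕ => α 0 * w1 + α 1 * w2) h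

lemma exists_wdeg (hp : p ≠ 0) :
    ∃ α ∈ p.support, α 0 * w1 + α 1 * w2 = wdeg w1 w2 p := by
  obtain ⟨α, hα, h⟩ := Finset.exists_mem_eq_sup p.support (support_nonempty.2 hp)
    (fun α : Fin 2 →₀ ℕ => α 0 * w1 + α 1 * w2)
  exact ⟨α, hα, h.symm⟩

lemma wdeg_add_le : wdeg w1 w2 (p + q) ≤ max (wdeg w1 w2 p) (wdeg w1 w2 q) := by
  apply Finset.sup_le
  intro α hα
  rcases Finset.mem_union.1 (support_add hα) with h | h
  · exact le_max_of_le_left (le_wdeg h)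
  · exact le_max_of_le_right (le_wdeg h)

lemma wdeg_add_right (h : wdeg w1 w2 q < wdeg w1 w2 p) :
    wdeg w1 w2 (p + q) = wdeg w1 w2 p := by
  have hp : p ≠ 0 := by
    rintro rfl; simp [wdeg_zero] at h
  obtain ⟨α, hα, hd⟩ := exists_wdeg (w1 := w1) (w2 := w2) hp
  apply le_antisymm (le_trans wdeg_add_le (by omega))
  have hq : α ∉ q.support := fun hq => absurd (le_wdeg (w1 := w1) (w2 := w2) hq) (by omega)
  have : α ∈ (p + q).support := by
    rw [mem_support_iff] at *
    rw [not_not] at hq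
    simp [coeff_add, hq, hα]
  calc wdeg w1 w2 p = α 0 * w1 + α 1 * w2 := hd.symm
    _ ≤ _ := le_wdeg this

lemma wdeg_add_left (h : wdeg w1 w2 p < wdeg w1 w2 q) :
    wdeg w1 w2 (p + q) = wdeg w1 w2 q := by
  rw [add_comm]; exact wdeg_add_right h

noncomputable def hom (w1 w2 : ℕ) :
    MvPolynomial (Fin 2) ℂ →ₐ[ℂ] Polynomial (MvPolynomial (Fin 2) ℂ) :=
  aeval ![Polynomial.C (X 0) * Polynomial.X ^ w1,
          Polynomial.C (X 1) * Polynomial.X ^ w2]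

lemma hom_monomial (α : Fin 2 →₀ ℕ) (c : ℂ) :
    hom w1 w2 (monomial α c)
      = Polynomial.C (monomial α c) * Polynomial.X ^ (α 0 * w1 + α 1 * w2) := by
  have h1 : (monomial α c : MvPolynomial (Fin 2) ℂ) = C c * (X 0 ^ α 0 * X 1 ^ α 1) := by
    rw [monomial_eq]
    congr 1
    rw [Finsupp.prod_pow]
    simp [Fin.prod_univ_two]
  rw [h1]
  simp only [map_mul, map_pow, hom, aeval_C, aeval_X]
  simp only [Matrix.cons_val_zero, Matrix.cons_val_one, Matrix.head_cons,
    Polynomial.algebraMap_apply, algebraMap_eq]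
  rw [mul_pow, mul_pow, ← pow_mul, ← pow_mul, ← Polynomial.C_pow, ← Polynomial.C_pow,
    pow_add]
  ring_nf

lemma hom_coeff_wdeg (hp : p ≠ 0) :
    (hom w1 w2 p).coeff (wdeg w1 w2 p) ≠ 0 := by
  obtain ⟨α0, hα0, hd0⟩ := exists_wdeg (w1 := w1) (w2 := w2) hp
  have hsum : hom w1 w2 p = ∑ β ∈ p.support, hom w1 w2 (monomial β (coeff β p)) := by
    conv_lhs => rw [← support_sum_monomial_coeff p]
    rw [map_sum]
  rw [hsum, Polynomial.finset_sum_coeff]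
  have : ∀ β ∈ p.support,
      (hom w1 w2 (monomial β (coeff β p))).coeff (wdeg w1 w2 p)
        = if β 0 * w1 + β 1 * w2 = wdeg w1 w2 p then (monomial β (coeff β p) : MvPolynomial (Fin 2) ℂ) else 0 := by
    intro β _
    rw [hom_monomial, Polynomial.coeff_C_mul, Polynomial.coeff_X_pow]
    by_cases hc : β 0 * w1 + β 1 * w2 = wdeg w1 w2 p
    · rw [if_pos hc, if_pos hc.symm, mul_one]
    · rw [if_neg hc, if_neg (fun h => hc h.symm), mul_zero]
  rw [Finset.sum_congr rfl this]
  intro h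
  have h2 := congrArg (MvPolynomial.coeff α0) h
  rw [coeff_zero] at h2
  rw [MvPolynomial.coeff_sum] at h2
  rw [Finset.sum_eq_single α0] at h2
  · rw [if_pos hd0, coeff_monomial, if_pos rfl] at h2
    exact (mem_support_iff.1 hα0) h2
  · intro β hβ hne
    split
    · rw [coeff_monomial, if_neg hne]
    · rfl
  · intro h; exact absurd hα0 h

lemma hom_ne_zero (hp : p ≠ 0) : hom w1 w2 p ≠ 0 := fun h => by
  have := hom_coeff_wdeg (w1 := w1) (w2 := w2) hp
  rw [h] at this; simp at this

lemma hom_natDegree (hp : p ≠ 0) : (hom w1 w2 p).natDegree = wdeg w1 w2 p := by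
  apply le_antisymm
  · conv_lhs => rw [← support_sum_monomial_coeff p]
    rw [map_sum]
    apply Polynomial.natDegree_sum_le_of_forall_le
    intro β hβ
    rw [hom_monomial]
    exact le_trans (Polynomial.natDegree_C_mul_X_pow_le _ _) (le_wdeg hβ)
  · exact Polynomial.le_natDegree_of_ne_zero (hom_coeff_wdeg hp)

lemma wdeg_mul (hp : p ≠ 0) (hq : q ≠ 0) :
    wdeg w1 w2 (p * q) = wdeg w1 w2 p + wdeg w1 w2 q := by
  have hpq : p * q ≠ 0 := mul_ne_zero hp hq
  rw [← hom_natDegree (w1 := w1) (w2 := w2) hpq, map_mul,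
    Polynomial.natDegree_mul (hom_ne_zero hp) (hom_ne_zero hq),
    hom_natDegree hp, hom_natDegree hq]

lemma wdeg_pow (hp : p ≠ 0) (n : ℕ) : wdeg w1 w2 (p ^ n) = n * wdeg w1 w2 p := by
  induction n with
  | zero =>
    rw [pow_zero, Nat.zero_mul]
    have : (1 : MvPolynomial (Fin 2) ℂ) = monomial 0 1 := by
      rw [monomial_zero']; simp
    rw [wdeg, this, support_monomial]
    simp
  | succ n ih => rw [pow_succ, wdeg_mul (pow_ne_zero n hp) hp, ih]; ring

lemma wdeg_C (c : ℂ) : wdeg w1 w2 (C c) = 0 := by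
  rw [wdeg, C_apply, support_monomial]
  split <;> simp

lemma wdeg_sum_le {ι : Type*} (s : Finset ι) (h : ι → MvPolynomial (Fin 2) ℂ) (N : ℕ)
    (hb : ∀ i ∈ s, wdeg w1 w2 (h i) ≤ N) : wdeg w1 w2 (∑ i ∈ s, h i) ≤ N := by
  classical
  induction s using Finset.induction with
  | empty => simp [wdeg_zero]
  | insert a s' hni ih =>
    rw [Finset.sum_insert hni]
    refine le_trans wdeg_add_le (max_le (hb a (Finset.mem_insert_self a s')) ?_)
    exact ih fun i hi => hb i (Finset.mem_insert_of_mem hi)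

lemma wdeg_aeval_le (g : Polynomial ℂ) (hq : q ≠ 0) :
    wdeg w1 w2 (Polynomial.aeval q g) ≤ g.natDegree * wdeg w1 w2 q := by
  rw [Polynomial.aeval_def, Polynomial.eval₂_eq_sum, Polynomial.sum_def]
  apply wdeg_sum_le
  intro i hi
  rw [algebraMap_eq]
  by_cases hc : g.coeff i = 0
  · simp [hc, wdeg_zero]
  · rw [wdeg_mul (fun h => hc (by simpa using congrArg (coeff 0) h)) (pow_ne_zero i hq),
      wdeg_C, wdeg_pow hq, zero_add]
    exact Nat.mul_le_mul_right _ (Polynomial.le_natDegree_of_ne_zero hc)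

lemma wdeg_aeval (g : Polynomial ℂ) (hg : 1 ≤ g.natDegree) (hq : 0 < wdeg w1 w2 q) :
    wdeg w1 w2 (Polynomial.aeval q g) = g.natDegree * wdeg w1 w2 q := by
  have hq0 : q ≠ 0 := ne_zero_of_wdeg_pos hq
  have hg0 : g ≠ 0 := fun h => by simp [h] at hg
  have hlead : wdeg w1 w2 (Polynomial.aeval q (Polynomial.C g.leadingCoeff
      * Polynomial.X ^ g.natDegree)) = g.natDegree * wdeg w1 w2 q := by
    rw [map_mul, map_pow, Polynomial.aeval_X, Polynomial.aeval_C, algebraMap_eq]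
    rw [wdeg_mul (fun h => Polynomial.leadingCoeff_ne_zero.2 hg0
        (by simpa using congrArg (coeff 0) h)) (pow_ne_zero _ hq0), wdeg_C, wdeg_pow hq0,
      zero_add]
  have hsplit : Polynomial.aeval q g
      = Polynomial.aeval q (Polynomial.C g.leadingCoeff * Polynomial.X ^ g.natDegree)
        + Polynomial.aeval q g.eraseLead := by
    rw [← map_add, add_comm, Polynomial.eraseLead_add_C_mul_X_pow]
  rw [hsplit, wdeg_add_right, hlead]
  rw [hlead]
  calc wdeg w1 w2 (Polynomial.aeval q g.eraseLead)
      ≤ g.eraseLead.natDegree * wdeg w1 w2 q := wdeg_aeval_le _ hq0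
    _ ≤ (g.natDegree - 1) * wdeg w1 w2 q :=
        Nat.mul_le_mul_right _ (Polynomial.eraseLead_natDegree_le g)
    _ < g.natDegree * wdeg w1 w2 q := by
        apply Nat.mul_lt_mul_of_lt_of_le (by omega) (le_refl _) hq

lemma pcomp_lowerT (g : Polynomial ℂ) (P : PolyMap) :
    pcomp (lowerT g) P = (P.1, P.2 + Polynomial.aeval P.1 g) := by
  unfold pcomp lowerT
  refine Prod.ext ?_ ?_ <;> simp only [map_add, aeval_X]
  · simp
  · rw [← Polynomial.aeval_algHom_apply]
    simp

lemma pcomp_upperT (g : Polynomial ℂ) (P : PolyMap) :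
    pcomp (upperT g) P = (P.1 + Polynomial.aeval P.2 g, P.2) := by
  unfold pcomp upperT
  refine Prod.ext ?_ ?_ <;> simp only [map_add, aeval_X]
  · rw [← Polynomial.aeval_algHom_apply]
    simp
  · simp

/-- "polynomial not involving variable j" -/
def ZV (j : Fin 2) (p : MvPolynomial (Fin 2) ℂ) : Prop := ∀ β ∈ p.support, β j = 0

lemma ZV_add {j : Fin 2} {p q : MvPolynomial (Fin 2) ℂ} (hp : ZV j p) (hq : ZV j q) :
    ZV j (p + q) := by
  intro β hβ
  rcases Finset.mem_union.1 (support_add hβ) with h | h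
  exacts [hp β h, hq β h]

lemma ZV_mul {j : Fin 2} {p q : MvPolynomial (Fin 2) ℂ} (hp : ZV j p) (hq : ZV j q) :
    ZV j (p * q) := by
  intro β hβ
  obtain ⟨β1, hβ1, β2, hβ2, rfl⟩ := Finset.mem_add.1 (support_mul p q hβ)
  simp [hp β1 hβ1, hq β2 hβ2]

lemma ZV_C {j : Fin 2} (c : ℂ) : ZV j (C c) := by
  intro β hβ
  rw [C_apply, support_monomial] at hβ
  split at hβ <;> simp_all

lemma ZV_pow {j : Fin 2} {p : MvPolynomial (Fin 2) ℂ} (hp : ZV j p) (n : ℕ) : ZV j (p ^ n) := by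
  induction n with
  | zero =>
    rw [pow_zero, show (1 : MvPolynomial (Fin 2) ℂ) = C 1 from (map_one C).symm]
    exact ZV_C 1
  | succ n ih => rw [pow_succ]; exact ZV_mul ih hp

lemma ZV_sum {j : Fin 2} {ι : Type*} (s : Finset ι) (h : ι → MvPolynomial (Fin 2) ℂ)
    (hs : ∀ i ∈ s, ZV j (h i)) : ZV j (∑ i ∈ s, h i) := by
  classical
  induction s using Finset.induction with
  | empty => intro β hβ; simp at hβ
  | insert a s' hni ih =>
    rw [Finset.sum_insert hni]
    exact ZV_add (hs a (Finset.mem_insert_self a s'))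
      (ih fun i hi => hs i (Finset.mem_insert_of_mem hi))

lemma ZV_aeval {j : Fin 2} {u : MvPolynomial (Fin 2) ℂ} (hu : ZV j u) (g : Polynomial ℂ) :
    ZV j (Polynomial.aeval u g) := by
  rw [Polynomial.aeval_def, Polynomial.eval₂_eq_sum, Polynomial.sum_def]
  apply ZV_sum
  intro i _
  rw [algebraMap_eq]
  exact ZV_mul (ZV_C _) (ZV_pow hu i)

lemma fsum_eq (α : Fin 2 →₀ ℕ) : (α.sum fun _ e => e) = α 0 + α 1 := by
  rw [Finsupp.sum_fintype _ _ (fun _ => rfl), Fin.sum_univ_two]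

lemma base_k2 (hw1 : 0 < w1) (hw2 : 0 < w2) {u v : MvPolynomial (Fin 2) ℂ}
    (hu : u.totalDegree = 1) (hv : v.totalDegree = 1) {g : Polynomial ℂ}
    (hg : 1 < g.natDegree) :
    0 < wdeg w1 w2 u ∧ wdeg w1 w2 u < wdeg w1 w2 (v + Polynomial.aeval u g) := by
  have hu0 : u ≠ 0 := fun h => by rw [h, totalDegree_zero] at hu; omega
  have hk1pos : 0 < wdeg w1 w2 u := by
    obtain ⟨α, hα, hd⟩ := Finset.exists_mem_eq_sup u.support (support_nonempty.2 hu0)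
      (fun s : Fin 2 →₀ ℕ => s.sum fun _ e => e)
    rw [MvPolynomial.totalDegree] at hu
    rw [hu, fsum_eq] at hd
    have hle := le_wdeg (w1 := w1) (w2 := w2) hα
    rcases (by omega : α 0 = 1 ∧ α 1 = 0 ∨ α 0 = 0 ∧ α 1 = 1) with ⟨h0, h1⟩ | ⟨h0, h1⟩ <;>
      rw [h0, h1] at hle <;> simp at hle <;> omega
  refine ⟨hk1pos, ?_⟩
  have hgu : wdeg w1 w2 (Polynomial.aeval u g) = g.natDegree * wdeg w1 w2 u :=
    wdeg_aeval g (by omega) hk1pos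
  by_cases hlt : wdeg w1 w2 v < g.natDegree * wdeg w1 w2 u
  · rw [wdeg_add_left (by rw [hgu]; omega), hgu]
    nlinarith
  · push_neg at hlt
    have hvne : v ≠ 0 := ne_zero_of_wdeg_pos (by nlinarith)
    obtain ⟨α, hα, hd⟩ := exists_wdeg (w1 := w1) (w2 := w2) hvne
    have hαle : α 0 + α 1 ≤ 1 := by
      have h := le_totalDegree hα
      rw [fsum_eq, hv] at h; exact h
    have hdpos : 0 < α 0 * w1 + α 1 * w2 := by rw [hd]; nlinarith
    have hk1v : wdeg w1 w2 u < wdeg w1 w2 v := by nlinarith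
    have hcase : (α 0 = 1 ∧ α 1 = 0) ∨ (α 0 = 0 ∧ α 1 = 1) := by
      have hn : ¬(α 0 = 0 ∧ α 1 = 0) := fun ⟨h0, h1⟩ => by rw [h0, h1] at hdpos; omega
      omega
    rcases hcase with ⟨h0, h1⟩ | ⟨h0, h1⟩
    · -- wdeg v = w1
      have hw1v : w1 = wdeg w1 w2 v := by rw [← hd, h0, h1]; ring
      have hZV : ZV 0 u := by
        intro β hβ
        by_contra hb
        have hβ0 : 1 ≤ β 0 := Nat.one_le_iff_ne_zero.2 hb
        have hle := le_wdeg (w1 := w1) (w2 := w2) hβ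
        have : w1 ≤ wdeg w1 w2 u := le_trans (by nlinarith) hle
        omega
      have hαn : α ∉ (Polynomial.aeval u g).support := fun h => by
        have := ZV_aeval hZV g α h; omega
      have hmem : α ∈ (v + Polynomial.aeval u g).support := by
        rw [mem_support_iff, coeff_add, notMem_support_iff.1 hαn, add_zero]
        exact mem_support_iff.1 hα
      have := le_wdeg (w1 := w1) (w2 := w2) hmem
      omega
    · -- wdeg v = w2
      have hw2v : w2 = wdeg w1 w2 v := by rw [← hd, h0, h1]; ring
      have hZV : ZV 1 u := by
        intro β hβ
        by_contra hb
        have hβ1 : 1 ≤ β 1 := Nat.one_le_iff_ne_zero.2 hb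
        have hle := le_wdeg (w1 := w1) (w2 := w2) hβ
        have : w2 ≤ wdeg w1 w2 u := le_trans (by nlinarith) hle
        omega
      have hαn : α ∉ (Polynomial.aeval u g).support := fun h => by
        have := ZV_aeval hZV g α h; omega
      have hmem : α ∈ (v + Polynomial.aeval u g).support := by
        rw [mem_support_iff, coeff_add, notMem_support_iff.1 hαn, add_zero]
        exact mem_support_iff.1 hα
      have := le_wdeg (w1 := w1) (w2 := w2) hmem
      omega

end Aux

set_option maxHeartbeats 1000000 in
/-- Weighted bidegree of `T_l ∘ ⋯ ∘ T_1 ∘ L1` (`l ≥ 2`) in terms of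
`(k1, k2) = wbideg (T_1 ∘ L1)` and the products of the degrees `deg f_i`. -/
theorem stmt_14 (w1 w2 : ℕ) (hw1 : 0 < w1) (hw2 : 0 < w2) (L1 : PolyMap)
    (hL1 : IsAffineAut L1) (f : ℕ → Polynomial ℂ) (l : ℕ) (hl : 2 ≤ l)
    (hf : ∀ i, 1 ≤ i → i ≤ l → 1 < (f i).natDegree)
    (k1 k2 : ℕ) (hk1 : k1 = wdeg w1 w2 (chain L1 f 1).1)
    (hk2 : k2 = wdeg w1 w2 (chain L1 f 1).2) :
    ((l = 2) →
      (wdeg w1 w2 (chain L1 f l).1, wdeg w1 w2 (chain L1 f l).2)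
        = (k2 * (f 2).natDegree, k2)) ∧
    ((2 < l ∧ l % 2 = 0) →
      (wdeg w1 w2 (chain L1 f l).1, wdeg w1 w2 (chain L1 f l).2)
        = (k2 * ∏ i ∈ Finset.Icc 2 l, (f i).natDegree,
           k2 * ∏ i ∈ Finset.Icc 2 (l - 1), (f i).natDegree)) ∧
    ((2 < l ∧ l % 2 = 1) →
      (wdeg w1 w2 (chain L1 f l).1, wdeg w1 w2 (chain L1 f l).2)
        = (k2 * ∏ i ∈ Finset.Icc 2 (l - 1), (f i).natDegree,
           k2 * ∏ i ∈ Finset.Icc 2 l, (f i).natDegree)) := by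
  obtain ⟨-, hutd, hvtd⟩ := hL1
  have hch : ∀ i, chain L1 f (i + 1)
      = pcomp (if i % 2 = 0 then lowerT (f (i + 1)) else upperT (f (i + 1)))
          (chain L1 f i) := fun i => rfl
  have hchain1 : chain L1 f 1 = (L1.1, L1.2 + Polynomial.aeval L1.1 (f 1)) := by
    rw [show (1 : ℕ) = 0 + 1 from rfl, hch, if_pos rfl]
    rw [show chain L1 f 0 = L1 from rfl, pcomp_lowerT]
  have hk1' : k1 = wdeg w1 w2 L1.1 := by rw [hk1, hchain1]
  have hk2' : k2 = wdeg w1 w2 (L1.2 + Polynomial.aeval L1.1 (f 1)) := by rw [hk2, hchain1]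
  have hbase := base_k2 hw1 hw2 hutd hvtd (hf 1 le_rfl (by omega))
  have hk1pos : 0 < k1 := by rw [hk1']; exact hbase.1
  have hk12 : k1 < k2 := by rw [hk1', hk2']; exact hbase.2
  have k2pos : 0 < k2 := by omega
  have Ppos : ∀ j, j ≤ l → 0 < ∏ i ∈ Finset.Icc 2 j, (f i).natDegree := by
    intro j hj
    apply Finset.prod_pos
    intro i hi
    rw [Finset.mem_Icc] at hi
    have := hf i (by omega) (by omega)
    omega
  have Pstep : ∀ m, 2 ≤ m → ∏ i ∈ Finset.Icc 2 m, (f i).natDegree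
      = (∏ i ∈ Finset.Icc 2 (m - 1), (f i).natDegree) * (f m).natDegree := by
    intro m hm
    conv_lhs => rw [show m = (m - 1) + 1 by omega]
    rw [Finset.prod_Icc_succ_top (by omega)]
    rw [show m - 1 + 1 = m by omega]
  have main : ∀ m, 2 ≤ m → m ≤ l →
      (m % 2 = 0 →
        wdeg w1 w2 (chain L1 f m).1 = k2 * ∏ i ∈ Finset.Icc 2 m, (f i).natDegree
        ∧ wdeg w1 w2 (chain L1 f m).2 = k2 * ∏ i ∈ Finset.Icc 2 (m - 1), (f i).natDegree) ∧
      (m % 2 = 1 →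
        wdeg w1 w2 (chain L1 f m).1 = k2 * ∏ i ∈ Finset.Icc 2 (m - 1), (f i).natDegree
        ∧ wdeg w1 w2 (chain L1 f m).2 = k2 * ∏ i ∈ Finset.Icc 2 m, (f i).natDegree) := by
    intro m hm
    induction m, hm using Nat.le_induction with
    | base =>
      intro hl2
      have hch2 : chain L1 f 2 = pcomp (upperT (f 2)) (chain L1 f 1) := by
        rw [show (2 : ℕ) = 1 + 1 from rfl, hch, if_neg (by norm_num)]
      have hP1 : ∏ i ∈ Finset.Icc 2 1, (f i).natDegree = 1 := by
        rw [Finset.Icc_eq_empty (by omega), Finset.prod_empty]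
      have hP2 : ∏ i ∈ Finset.Icc 2 2, (f i).natDegree = (f 2).natDegree := by
        rw [Finset.Icc_self, Finset.prod_singleton]
      refine ⟨fun _ => ?_, fun h => by omega⟩
      rw [hch2, pcomp_upperT]
      dsimp only
      have hn2 : 1 ≤ (f 2).natDegree := by have := hf 2 (by omega) hl2; omega
      have hg : wdeg w1 w2 (Polynomial.aeval (chain L1 f 1).2 (f 2))
          = (f 2).natDegree * k2 := by
        rw [wdeg_aeval _ hn2 (by rw [← hk2]; omega : 0 < wdeg w1 w2 (chain L1 f 1).2), ← hk2]
      constructor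
      · rw [wdeg_add_left (by rw [hg, ← hk1]; nlinarith), hg, hP2]
        ring
      · rw [show (2 : ℕ) - 1 = 1 from rfl, hP1, mul_one, ← hk2]
    | succ m hm2 ih =>
      intro hml
      have hmle : m ≤ l := by omega
      obtain ⟨ihe, iho⟩ := ih hmle
      have hm1 : m + 1 - 1 = m := by omega
      have hprodle : ∏ i ∈ Finset.Icc 2 (m - 1), (f i).natDegree
          ≤ ∏ i ∈ Finset.Icc 2 m, (f i).natDegree := by
        rw [Pstep m hm2]
        have h1 : 1 ≤ (f m).natDegree := by have := hf m (by omega) hmle; omega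
        nlinarith [Ppos (m - 1) (by omega)]
      have hn : 1 ≤ (f (m + 1)).natDegree := by have := hf (m + 1) (by omega) hml; omega
      have hn2 : 2 ≤ (f (m + 1)).natDegree := by have := hf (m + 1) (by omega) hml; omega
      have hPm : 0 < ∏ i ∈ Finset.Icc 2 m, (f i).natDegree := Ppos m hmle
      rcases Nat.mod_two_eq_zero_or_one m with hpar | hpar
      · obtain ⟨hA, hB⟩ := ihe hpar
        have hstep : chain L1 f (m + 1) = pcomp (lowerT (f (m + 1))) (chain L1 f m) := by
          rw [hch, if_pos hpar]
        refine ⟨fun h => by omega, fun _ => ?_⟩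
        rw [hstep, pcomp_lowerT]
        dsimp only
        have hApos : 0 < wdeg w1 w2 (chain L1 f m).1 := by
          rw [hA]; exact Nat.mul_pos k2pos hPm
        have hg : wdeg w1 w2 (Polynomial.aeval (chain L1 f m).1 (f (m + 1)))
            = (f (m + 1)).natDegree * (k2 * ∏ i ∈ Finset.Icc 2 m, (f i).natDegree) := by
          rw [wdeg_aeval _ hn hApos, hA]
        have hBA : wdeg w1 w2 (chain L1 f m).2
            < wdeg w1 w2 (Polynomial.aeval (chain L1 f m).1 (f (m + 1))) := by
          rw [hg, hB]
          nlinarith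
        refine ⟨by rw [hm1, hA], ?_⟩
        rw [wdeg_add_left hBA, hg, Pstep (m + 1) (by omega), hm1]
        ring
      · obtain ⟨hA, hB⟩ := iho hpar
        have hstep : chain L1 f (m + 1) = pcomp (upperT (f (m + 1))) (chain L1 f m) := by
          rw [hch, if_neg (by omega)]
        refine ⟨fun _ => ?_, fun h => by omega⟩
        rw [hstep, pcomp_upperT]
        dsimp only
        have hBpos : 0 < wdeg w1 w2 (chain L1 f m).2 := by
          rw [hB]; exact Nat.mul_pos k2pos hPm
        have hg : wdeg w1 w2 (Polynomial.aeval (chain L1 f m).2 (f (m + 1)))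
            = (f (m + 1)).natDegree * (k2 * ∏ i ∈ Finset.Icc 2 m, (f i).natDegree) := by
          rw [wdeg_aeval _ hn hBpos, hB]
        have hAB : wdeg w1 w2 (chain L1 f m).1
            < wdeg w1 w2 (Polynomial.aeval (chain L1 f m).2 (f (m + 1))) := by
          rw [hg, hA]
          nlinarith
        refine ⟨?_, by rw [hm1, hB]⟩
        rw [wdeg_add_left hAB, hg, Pstep (m + 1) (by omega), hm1]
        ring
  refine ⟨?_, ?_, ?_⟩
  · intro hl2
    subst hl2
    obtain ⟨h1, h2⟩ := (main 2 le_rfl hl).1 (by norm_num)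
    have e1 : ∏ i ∈ Finset.Icc 2 2, (f i).natDegree = (f 2).natDegree := by
      rw [Finset.Icc_self, Finset.prod_singleton]
    have e2 : ∏ i ∈ Finset.Icc 2 (2 - 1), (f i).natDegree = 1 := by
      rw [show (2 : ℕ) - 1 = 1 from rfl, Finset.Icc_eq_empty (by omega), Finset.prod_empty]
    rw [h1, h2, e1, e2, mul_one]
  · rintro ⟨hl2, hpar⟩
    obtain ⟨h1, h2⟩ := (main l (by omega) le_rfl).1 hpar
    rw [h1, h2]
  · rintro ⟨hl2, hpar⟩
    obtain ⟨h1, h2⟩ := (main l (by omega) le_rfl).2 hpar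
    rw [h1, h2]
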